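/- Let n ≥ 1 and m ≥ 2. A function f : ℤ/nℤ → ℤ/mℤ is congruence preserving if and only if there exist p < min(n, μ(m)) and elements a_0, …, a_p ∈ ℤ/mℤ such that lcm(k) (viewed in ℤ/mℤ) divides a_k in ℤ/mℤ for all k ≤ p, and f(x) = Σ_{k=0}^{p} a_k · C(x, k) in ℤ/mℤ for every x ∈ {0, …, n−1}. -/

import Mathlib

/-- `ulcm k` is the least common multiple of `1, 2, …, k`, with `ulcm 0 = 1`. -/
def ulcm (k : ℕ) : ℕ := (Finset.Icc 1 k).lcm id

/-- `mu m` is the largest prime power dividing `m`. -/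
def mu (m : ℕ) : ℕ := m.primeFactors.sup fun p => p ^ m.factorization p

/-- `f : ZMod n → ZMod m` is congruence preserving. -/
def CongPres (n m : ℕ) (f : ZMod n → ZMod m) : Prop :=
  ∀ d : ℕ, ∀ hd : d ∣ m, ∀ a b : ℕ, a < n → b < n → a ≡ b [MOD d] →
    ZMod.castHom hd (ZMod d) (f a) = ZMod.castHom hd (ZMod d) (f b)

/-- `CP n m` is the number of congruence preserving functions `ZMod n → ZMod m`. -/
noncomputable def CP (n m : ℕ) : ℕ := Nat.card {f : ZMod n → ZMod m // CongPres n m f}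

set_option linter.unusedSectionVars false
set_option linter.unnecessarySimpa false

namespace CPAux


lemma ulcm_zero : ulcm 0 = 1 := by simp [ulcm]

lemma ulcm_succ (k : ℕ) : ulcm (k+1) = Nat.lcm (k+1) (ulcm k) := by
  have : Finset.Icc 1 (k+1) = insert (k+1) (Finset.Icc 1 k) := by
    ext x; simp [Finset.mem_Icc]; omega
  rw [ulcm, ulcm, this, Finset.lcm_insert]
  rfl

lemma ulcm_pos (k : ℕ) : 0 < ulcm k := by
  induction k with
  | zero => simp [ulcm_zero]
  | succ k ih =>
    rw [ulcm_succ]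
    exact Nat.pos_of_ne_zero (Nat.lcm_ne_zero (by omega) ih.ne')

lemma dvd_ulcm {j k : ℕ} (h1 : 1 ≤ j) (h2 : j ≤ k) : j ∣ ulcm k :=
  Finset.dvd_lcm (by simp [Finset.mem_Icc]; omega)

lemma pow_le_of_dvd_ulcm {q s k : ℕ} (hq : q.Prime) (hs : 1 ≤ s) (h : q ^ s ∣ ulcm k) :
    q ^ s ≤ k := by
  induction k with
  | zero =>
    rw [ulcm_zero, Nat.dvd_one] at h
    have h2 : 2 ≤ q := hq.two_le
    have := Nat.one_lt_pow (by omega : s ≠ 0) (by omega : 1 < q)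
    omega
  | succ k ih =>
    rw [ulcm_succ] at h
    have h1 : (k+1) ≠ 0 := by omega
    have h2 : ulcm k ≠ 0 := (ulcm_pos k).ne'
    rw [Nat.Prime.pow_dvd_iff_le_factorization hq (Nat.lcm_ne_zero h1 h2),
      Nat.factorization_lcm h1 h2, Finsupp.sup_apply] at h
    rcases le_max_iff.mp h with h | h
    · exact Nat.le_of_dvd (by omega) ((Nat.Prime.pow_dvd_iff_le_factorization hq h1).mpr h)
    · exact le_trans (ih ((Nat.Prime.pow_dvd_iff_le_factorization hq h2).mpr h)) (by omega)

lemma pow_le_mu {m q s : ℕ} (hm : m ≠ 0) (hq : q.Prime) (hs : 1 ≤ s) (hdvd : q ^ s ∣ m) :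
    q ^ s ≤ mu m := by
  have hqm : q ∣ m := dvd_trans (dvd_pow_self q (by omega)) hdvd
  have hmem : q ∈ m.primeFactors := Nat.mem_primeFactors.mpr ⟨hq, hqm, hm⟩
  calc q ^ s ≤ q ^ (m.factorization q) :=
        Nat.pow_le_pow_right hq.pos ((Nat.Prime.pow_dvd_iff_le_factorization hq hm).mp hdvd)
    _ ≤ mu m := Finset.le_sup (f := fun p => p ^ m.factorization p) hmem

lemma two_le_mu {m : ℕ} (hm : 2 ≤ m) : 2 ≤ mu m := by
  obtain ⟨q, hq, hqm⟩ := Nat.exists_prime_and_dvd (by omega : m ≠ 1)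
  have := pow_le_mu (m := m) (by omega) hq le_rfl (by simpa using hqm)
  have := hq.two_le
  simp only [pow_one] at *
  omega

lemma m_dvd_ulcm {m k : ℕ} (hm : 2 ≤ m) (h : mu m ≤ k) : m ∣ ulcm k := by
  rw [Nat.dvd_iff_prime_pow_dvd_dvd]
  intro p s hp hps
  rcases Nat.eq_zero_or_pos s with rfl | hs
  · simpa using one_dvd _
  
  have h1 : p ^ s ≤ mu m := pow_le_mu (m := m) (by omega) hp hs hps
  exact dvd_ulcm (Nat.one_le_pow _ _ hp.pos) (le_trans h1 h)

lemma choose_mul_gcd (t i : ℕ) (ht : 1 ≤ t) : t ∣ t.choose i * Nat.gcd i t := by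
  rcases Nat.eq_zero_or_pos i with rfl | hi
  · simp
  set g := Nat.gcd i t with hg
  have hg0 : 0 < g := Nat.gcd_pos_of_pos_right i ht
  have hgi : i / g * g = i := Nat.div_mul_cancel (Nat.gcd_dvd_left i t)
  have hgt : t / g * g = t := Nat.div_mul_cancel (Nat.gcd_dvd_right i t)
  have hkey : i * t.choose i = t * (t-1).choose (i-1) := by
    have h0 := Nat.add_one_mul_choose_eq (t-1) (i-1)
    rw [Nat.sub_add_cancel ht, Nat.sub_add_cancel hi] at h0
    rw [h0, mul_comm]
  have hcop : (t / g).Coprime (i / g) := (Nat.coprime_div_gcd_div_gcd hg0).symm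
  have e1 : (i / g * t.choose i) * g = (t / g * (t-1).choose (i-1)) * g := by
    calc (i / g * t.choose i) * g = (i / g * g) * t.choose i := by ring
      _ = i * t.choose i := by rw [hgi]
      _ = t * (t-1).choose (i-1) := hkey
      _ = (t / g * g) * (t-1).choose (i-1) := by rw [hgt]
      _ = (t / g * (t-1).choose (i-1)) * g := by ring
  have e2 : i / g * t.choose i = t / g * (t-1).choose (i-1) :=
    Nat.eq_of_mul_eq_mul_right hg0 e1
  have h4 : t / g ∣ t.choose i :=
    Nat.Coprime.dvd_of_dvd_mul_right hcop ⟨(t-1).choose (i-1), by rw [← e2]; ring⟩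
  obtain ⟨c, hc⟩ := h4
  exact ⟨c, by calc t.choose i * g = (t / g * c) * g := by rw [hc]
    _ = (t / g * g) * c := by ring
    _ = t * c := by rw [hgt]⟩

section zmod
variable {M : ℕ} [NeZero M]

lemma castHom_eq_zero_iff {d : ℕ} [NeZero d] (hd : d ∣ M) (x : ZMod M) :
    ZMod.castHom hd (ZMod d) x = 0 ↔ d ∣ x.val := by
  rw [ZMod.castHom_apply, ← ZMod.natCast_val, ZMod.natCast_eq_zero_iff]

lemma exists_eq_mul_of_dvd_val {d : ℕ} (x : ZMod M) (h : d ∣ x.val) :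
    ∃ u : ZMod M, x = (d : ZMod M) * u := by
  obtain ⟨c, hc⟩ := h
  exact ⟨(c : ZMod M), by rw [← Nat.cast_mul, ← hc, ZMod.natCast_rightInverse x]⟩

lemma window {R : Type*} [CommRing R] (φ : ZMod M →+* R) (r : ℕ) (x : ℕ) (g : ℕ → ZMod M)
    (h : ∀ i ≤ r, φ (g (x + i)) = 0) : φ ((fwdDiff 1)^[r] g x) = 0 := by
  induction r generalizing g with
  | zero => simpa using h 0 le_rfl
  | succ r ih =>
    rw [Function.iterate_succ_apply]
    apply ih
    intro i hi
    have he : fwdDiff 1 g (x + i) = g (x + (i+1)) - g (x + i) := by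
      show g (x + i + 1) - g (x + i) = _
      ring_nf
    rw [he, map_sub, h (i+1) (by omega), h i (by omega), sub_zero]

end zmod

section main
variable {n m : ℕ} [NeZero n] [NeZero m] {f : ZMod n → ZMod m}

lemma lemP {q s x : ℕ} (hq : q.Prime) (hqm : q ^ s ∣ m) (hx : x + q ^ s < n)
    (hf : CongPres n m f) :
    ZMod.castHom hqm (ZMod (q ^ s)) ((fwdDiff 1)^[q ^ s] (fun i : ℕ => f i) x) = 0 := by
  haveI : NeZero (q ^ s) := ⟨(pow_pos hq.pos s).ne'⟩
  set t := q ^ s with hts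
  have ht : 1 ≤ t := Nat.one_le_pow _ _ hq.pos
  set φ := ZMod.castHom hqm (ZMod t) with hφ
  rw [fwdDiff_iter_eq_sum_shift, map_sum]
  have key : ∀ i ∈ Finset.range (t+1),
      φ ((((-1:ℤ) ^ (t - i) * (t.choose i)) • (fun j : ℕ => f j) (x + i • 1)))
        = ((-1:ℤ) ^ (t - i) * (t.choose i)) • φ (f (x : ℕ)) := by
    intro i hi
    have hi2 : i ≤ t := by have := Finset.mem_range.mp hi; omega
    have hxt : x + t < n := hx
    have hsm : (i • 1 : ℕ) = i := by simp
    rw [hsm]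
    set d := Nat.gcd i t with hd
    have hd0 : 0 < d := Nat.gcd_pos_of_pos_right i ht
    haveI : NeZero d := ⟨hd0.ne'⟩
    have hdt : d ∣ t := Nat.gcd_dvd_right i t
    have hdm : d ∣ m := hdt.trans hqm
    obtain ⟨u, hu⟩ : ∃ u, φ (f ((x + i : ℕ))) = φ (f (x : ℕ)) + (d : ZMod t) * u := by
      have hcong : ZMod.castHom hdm (ZMod d) (f ((x+i : ℕ)))
          = ZMod.castHom hdm (ZMod d) (f (x : ℕ)) := by
        refine hf d hdm (x+i) x (by omega) (by omega)
          (Nat.ModEq.symm ((Nat.modEq_iff_dvd' (by omega)).mpr ?_))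
        simpa using Nat.gcd_dvd_left i t
      have hcomp : ZMod.castHom hdm (ZMod d) = (ZMod.castHom hdt (ZMod d)).comp φ := by
        rw [hφ, ZMod.castHom_comp]
      rw [hcomp] at hcong
      simp only [RingHom.comp_apply] at hcong
      have : ZMod.castHom hdt (ZMod d) (φ (f ((x+i:ℕ))) - φ (f (x:ℕ))) = 0 := by
        rw [map_sub, hcong, sub_self]
      obtain ⟨u, hu⟩ := exists_eq_mul_of_dvd_val _ ((castHom_eq_zero_iff hdt _).mp this)
      exact ⟨u, by linear_combination hu⟩
    simp only
    rw [map_zsmul, hu, smul_add]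
    have hzero : ((t.choose i * d : ℕ) : ZMod t) = 0 :=
      (ZMod.natCast_eq_zero_iff _ _).mpr (choose_mul_gcd t i ht)
    have : ((-1:ℤ) ^ (t - i) * (t.choose i)) • ((d : ZMod t) * u) = 0 := by
      rw [zsmul_eq_mul]
      push_cast at hzero ⊢
      linear_combination ((-1 : ZMod t)) ^ (t - i) * u * hzero
    rw [this, add_zero]
  rw [Finset.sum_congr rfl key, ← Finset.sum_smul]
  have hsum : (∑ i ∈ Finset.range (t+1), ((-1:ℤ) ^ (t - i) * (t.choose i))) = 0 := by
    rw [← Finset.sum_range_reflect]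
    have : ∀ j ∈ Finset.range (t+1), ((-1:ℤ) ^ (t - (t + 1 - 1 - j)) * (t.choose (t + 1 - 1 - j)))
        = (-1:ℤ) ^ j * (t.choose j) := by
      intro j hj
      simp only [Finset.mem_range] at hj
      have h1 : t - (t + 1 - 1 - j) = j := by omega
      have h2 : t + 1 - 1 - j = t - j := by omega
      rw [h1, h2, Nat.choose_symm (by omega)]
    rw [Finset.sum_congr rfl this]
    exact Int.alternating_sum_range_choose_of_ne (by omega)
  rw [hsum, zero_smul]



lemma a_dvd (hm : 2 ≤ m) (hf : CongPres n m f) {k : ℕ} (hk : k < n) :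
    (ulcm k : ZMod m) ∣ (fwdDiff 1)^[k] (fun i : ℕ => f i) 0 := by
  set X := (fwdDiff 1)^[k] (fun i : ℕ => f i) 0 with hX
  have hval : Nat.gcd (ulcm k) m ∣ X.val := by
    rw [Nat.dvd_iff_prime_pow_dvd_dvd]
    intro p s hp hps
    rcases Nat.eq_zero_or_pos s with rfl | hs
    · simpa using one_dvd _
    have hpu : p ^ s ∣ ulcm k := dvd_trans hps (Nat.gcd_dvd_left _ _)
    have hpm : p ^ s ∣ m := dvd_trans hps (Nat.gcd_dvd_right _ _)
    have hle : p ^ s ≤ k := pow_le_of_dvd_ulcm hp hs hpu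
    haveI : NeZero (p ^ s) := ⟨(pow_pos hp.pos s).ne'⟩
    rw [← castHom_eq_zero_iff hpm X]
    have hpk : k - p ^ s + p ^ s = k := by omega
    have hsplit : (fwdDiff 1)^[k - p ^ s] ((fwdDiff 1)^[p ^ s] (fun i : ℕ => f i)) 0 = X := by
      rw [← Function.iterate_add_apply, hpk]
    rw [← hsplit]
    apply window
    intro i hi
    refine lemP (x := 0 + i) hp hpm ?_ hf
    omega
  obtain ⟨c, hc⟩ := hval
  have hbez := Nat.gcd_eq_gcd_ab (ulcm k) m
  have h2 : ((Nat.gcd (ulcm k) m : ZMod m)) = (ulcm k : ZMod m) * ((Nat.gcdA (ulcm k) m : ℤ) : ZMod m) := by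
    have h3 : (((Nat.gcd (ulcm k) m : ℤ)) : ZMod m)
        = (((ulcm k : ℤ) * Nat.gcdA (ulcm k) m + (m : ℤ) * Nat.gcdB (ulcm k) m : ℤ) : ZMod m) := by
      exact congrArg _ hbez
    push_cast at h3
    rw [ZMod.natCast_self, zero_mul, add_zero] at h3
    exact h3
  refine ⟨((Nat.gcdA (ulcm k) m : ℤ) : ZMod m) * (c : ZMod m), ?_⟩
  calc X = ((Nat.gcd (ulcm k) m * c : ℕ) : ZMod m) := by
        rw [← hc]; exact (ZMod.natCast_rightInverse X).symm
    _ = (Nat.gcd (ulcm k) m : ZMod m) * (c : ZMod m) := by push_cast; ring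
    _ = (ulcm k : ZMod m) * (((Nat.gcdA (ulcm k) m : ℤ) : ZMod m) * (c : ZMod m)) := by
        rw [h2]; ring

lemma forward (hn : 1 ≤ n) (hm : 2 ≤ m) (hf : CongPres n m f) :
    ∃ p : ℕ, p < min n (mu m) ∧ ∃ a : ℕ → ZMod m,
      (∀ k ≤ p, (ulcm k : ZMod m) ∣ a k) ∧
      ∀ x : ZMod n, f x = ∑ k ∈ Finset.range (p + 1), a k * (Nat.choose x.val k : ZMod m) := by
  have hmu := two_le_mu hm
  have hmin : 1 ≤ min n (mu m) := by omega
  refine ⟨min n (mu m) - 1, by omega, fun k => (fwdDiff 1)^[k] (fun i : ℕ => f i) 0,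
    fun k hk => a_dvd hm hf (k := k) (by omega), fun x => ?_⟩
  have hxv : x.val < n := ZMod.val_lt x
  have hnewton := shift_eq_sum_fwdDiff_iter (M := ℕ) (G := ZMod m) (h := 1)
    (fun i : ℕ => f i) x.val 0
  simp only [zero_add, smul_eq_mul, mul_one] at hnewton
  have hfx : f x = f ((x.val : ℕ) : ZMod n) := by rw [ZMod.natCast_rightInverse x]
  rw [hfx, hnewton]
  calc ∑ k ∈ Finset.range (x.val + 1), x.val.choose k • (fwdDiff 1)^[k] (fun i : ℕ => f i) 0
      = ∑ k ∈ Finset.range n, x.val.choose k • (fwdDiff 1)^[k] (fun i : ℕ => f i) 0 := by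
        refine Finset.sum_subset (Finset.range_subset_range.mpr (by omega)) ?_
        intro k hk1 hk2
        simp only [Finset.mem_range] at hk1 hk2
        rw [Nat.choose_eq_zero_of_lt (by omega), zero_nsmul]
    _ = ∑ k ∈ Finset.range n, (fwdDiff 1)^[k] (fun i : ℕ => f i) 0 * (x.val.choose k : ZMod m) := by
        refine Finset.sum_congr rfl fun k _ => ?_
        rw [nsmul_eq_mul, mul_comm]
    _ = ∑ k ∈ Finset.range (min n (mu m) - 1 + 1),
          (fwdDiff 1)^[k] (fun i : ℕ => f i) 0 * (x.val.choose k : ZMod m) := by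
        refine (Finset.sum_subset (Finset.range_subset_range.mpr (by omega)) ?_).symm
        intro k hk1 hk2
        simp only [Finset.mem_range] at hk1 hk2
        have hmuk : mu m ≤ k := by omega
        have hz : (ulcm k : ZMod m) = 0 :=
          (ZMod.natCast_eq_zero_iff _ _).mpr (m_dvd_ulcm hm hmuk)
        obtain ⟨t, ht⟩ := a_dvd hm hf (f := f) (k := k) hk1
        rw [ht, hz, zero_mul, zero_mul]

end main

lemma key_dvd (b c k : ℕ) :
    (c : ℤ) ∣ (ulcm k : ℤ) * (((b+c).choose k : ℤ) - (b.choose k : ℤ)) := by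
  have hv : ((b+c).choose k : ℤ)
      = ∑ ij ∈ Finset.HasAntidiagonal.antidiagonal k, (b.choose ij.1 : ℤ) * (c.choose ij.2 : ℤ) := by
    rw [Nat.add_choose_eq]
    push_cast
    rfl
  rw [Finset.Nat.sum_antidiagonal_eq_sum_range_succ_mk] at hv
  rw [Finset.sum_range_succ] at hv
  simp only [Nat.sub_self, Nat.choose_zero_right, Nat.cast_one, mul_one] at hv
  have hdiff : ((b+c).choose k : ℤ) - (b.choose k : ℤ)
      = ∑ j ∈ Finset.range k, (b.choose j : ℤ) * (c.choose (k-j) : ℤ) := by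
    rw [hv]; ring
  rw [hdiff, Finset.mul_sum]
  apply Finset.dvd_sum
  intro j hj
  have hj' : j < k := Finset.mem_range.mp hj
  obtain ⟨e, he⟩ := dvd_ulcm (j := k - j) (k := k) (by omega) (by omega)
  have hch : (k - j) * c.choose (k-j) = c * (c-1).choose (k-j-1) := by
    rcases Nat.eq_zero_or_pos c with rfl | hc
    · rw [Nat.choose_eq_zero_of_lt (by omega)]
      ring
    · have h0 := Nat.add_one_mul_choose_eq (c-1) (k-j-1)
      rw [Nat.sub_add_cancel hc, Nat.sub_add_cancel (by omega : 1 ≤ k - j)] at h0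
      rw [mul_comm (k-j), h0, mul_comm]
  have he' : (ulcm k : ℤ) = ((k - j : ℕ) : ℤ) * (e : ℤ) := by
    have := congrArg (fun z : ℕ => (z : ℤ)) he
    simpa using this
  have hch' : ((k - j : ℕ) : ℤ) * (c.choose (k-j) : ℤ)
      = (c : ℤ) * ((c-1).choose (k-j-1) : ℤ) := by
    have := congrArg (fun z : ℕ => (z : ℤ)) hch
    simpa using this
  refine ⟨(e : ℤ) * (b.choose j : ℤ) * ((c-1).choose (k-j-1) : ℤ), ?_⟩
  linear_combination ((e : ℤ) * (b.choose j : ℤ)) * hch'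
    + ((b.choose j : ℤ) * (c.choose (k-j) : ℤ)) * he'

section bw
variable {n m : ℕ} [NeZero n] [NeZero m] {f : ZMod n → ZMod m}

lemma backward (hm : 2 ≤ m)
    (H : ∃ p : ℕ, p < min n (mu m) ∧ ∃ a : ℕ → ZMod m,
      (∀ k ≤ p, (ulcm k : ZMod m) ∣ a k) ∧
      ∀ x : ZMod n, f x = ∑ k ∈ Finset.range (p + 1), a k * (Nat.choose x.val k : ZMod m)) :
    CongPres n m f := by
  obtain ⟨p, hp, a, hdvd, hrep⟩ := H
  intro d hd a' b' ha hb hab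
  have hd0 : d ≠ 0 := by rintro rfl; simp only [Nat.zero_dvd] at hd; omega
  haveI : NeZero d := ⟨hd0⟩
  have hva : ((a' : ZMod n)).val = a' := ZMod.val_cast_of_lt ha
  have hvb : ((b' : ZMod n)).val = b' := ZMod.val_cast_of_lt hb
  rw [hrep ((a' : ZMod n)), hrep ((b' : ZMod n)), map_sum, map_sum, hva, hvb]
  refine Finset.sum_congr rfl fun k hk => ?_
  obtain ⟨t, ht⟩ := hdvd k (by exact Nat.lt_succ_iff.mp (Finset.mem_range.mp hk))
  have hdac : (d : ℤ) ∣ (ulcm k : ℤ) * ((a'.choose k : ℤ) - (b'.choose k : ℤ)) := by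
    rcases le_total a' b' with hle | hle
    · have hc : (d : ℤ) ∣ ((b' - a' : ℕ) : ℤ) := by
        rw [Int.natCast_sub hle]; exact hab.dvd
      have hk2 := key_dvd a' (b' - a') k
      rw [Nat.add_sub_cancel' hle] at hk2
      have h3 := dvd_trans hc hk2
      have h4 : (ulcm k : ℤ) * ((a'.choose k : ℤ) - (b'.choose k : ℤ))
          = -((ulcm k : ℤ) * ((b'.choose k : ℤ) - (a'.choose k : ℤ))) := by ring
      rw [h4]
      exact dvd_neg.mpr h3
    · have hc : (d : ℤ) ∣ ((a' - b' : ℕ) : ℤ) := by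
        rw [Int.natCast_sub hle]; exact hab.symm.dvd
      have hk2 := key_dvd b' (a' - b') k
      rw [Nat.add_sub_cancel' hle] at hk2
      exact dvd_trans hc hk2
  have hzero : (ulcm k : ZMod d) * ((a'.choose k : ZMod d) - (b'.choose k : ZMod d)) = 0 := by
    have := (ZMod.intCast_zmod_eq_zero_iff_dvd _ d).mpr hdac
    push_cast at this
    exact this
  rw [ht]
  simp only [map_mul, map_natCast]
  linear_combination (ZMod.castHom hd (ZMod d) t) * hzero

end bw
end CPAux

theorem stmt_12 (n m : ℕ) (hn : 1 ≤ n) (hm : 2 ≤ m) (f : ZMod n → ZMod m) :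
    CongPres n m f ↔
      ∃ p : ℕ, p < min n (mu m) ∧ ∃ a : ℕ → ZMod m,
        (∀ k ≤ p, (ulcm k : ZMod m) ∣ a k) ∧
        ∀ x : ZMod n, f x = ∑ k ∈ Finset.range (p + 1), a k * (Nat.choose x.val k : ZMod m) := by
  haveI : NeZero n := ⟨by omega⟩
  haveI : NeZero m := ⟨by omega⟩
  exact ⟨fun hf => CPAux.forward hn hm hf, fun H => CPAux.backward hm H⟩
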